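/- Let b, c > 0 be real numbers, let L = cℤ ⊂ ℝ ⊂ ℂ be the rank one discrete subgroup generated by c, equip ℂ with the norm ‖z‖ = b|z|, and let dp(z) = b²·exp(−πb²|z|²) dx dy be the unique Gaussian probability measure on ℂ normalized so that ∫ ‖z‖ dp(z) = 1/2. Then the average of the counting function [ξ/L] := #{ℓ ∈ L : ‖ℓ‖ ≤ ‖ξ‖} equals the theta sum of the euclidean lattice (L, ‖·‖): ∫_ℂ [ξ/L] dp(ξ) = Σ_{m ∈ ℤ} exp(−π b²c² m²). Equivalently, exp(h⁰_θ(L,‖·‖)) = ∫ [ξ/L] dp(ξ), where h⁰_θ(L,‖·‖) := log Σ_{v ∈ L} exp(−π‖v‖²). -/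

import Mathlib

open MeasureTheory Real

open Set Metric Filter in
private lemma ftc_tail_aux (b a : ℝ) (hb : 0 < b) (ha : 0 ≤ a) :
    ∫ y in Ioi a, 2 * π * b ^ 2 * y * Real.exp (-(π * b ^ 2 * y ^ 2)) =
      Real.exp (-(π * b ^ 2 * a ^ 2)) := by
  have hderiv : ∀ y : ℝ, HasDerivAt (fun y : ℝ => -(Real.exp (-(π * b ^ 2 * y ^ 2))))
      (2 * π * b ^ 2 * y * Real.exp (-(π * b ^ 2 * y ^ 2))) y := by
    intro y
    have h1 : HasDerivAt (fun y : ℝ => -(π * b ^ 2 * y ^ 2))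
        (-(π * b ^ 2 * (2 * y ^ 1))) y := ((hasDerivAt_pow 2 y).const_mul (π * b ^ 2)).neg
    have h2 : HasDerivAt (fun y : ℝ => -(Real.exp (-(π * b ^ 2 * y ^ 2))))
        (-(Real.exp (-(π * b ^ 2 * y ^ 2)) * -(π * b ^ 2 * (2 * y ^ 1)))) y := (h1.exp).neg
    convert h2 using 1
    ring
  have htend : Tendsto (fun y : ℝ => -(Real.exp (-(π * b ^ 2 * y ^ 2)))) atTop (nhds 0) := by
    rw [show (0:ℝ) = -0 by ring]
    refine (Real.tendsto_exp_atBot.comp ?_).neg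
    rw [tendsto_neg_atBot_iff]
    exact (tendsto_pow_atTop two_ne_zero).const_mul_atTop (by positivity)
  have := integral_Ioi_of_hasDerivAt_of_nonneg' (g' := fun y =>
      2 * π * b ^ 2 * y * Real.exp (-(π * b ^ 2 * y ^ 2)))
    (fun y _ => hderiv y) (fun y hy => by
      have hy' : 0 ≤ y := le_trans ha (le_of_lt hy)
      positivity) htend
  rw [this]
  ring

open Set Metric Filter in
private lemma gaussian_tail_aux (b a : ℝ) (hb : 0 < b) (ha : 0 ≤ a) :
    ∫ ξ : ℂ, ({ξ : ℂ | a ≤ ‖ξ‖}.indicator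
        (fun ξ => b ^ 2 * Real.exp (-(π * b ^ 2 * ‖ξ‖ ^ 2))) ξ)
      = Real.exp (-(π * b ^ 2 * a ^ 2)) := by
  have hfn : ∀ ξ : ℂ, ({ξ : ℂ | a ≤ ‖ξ‖}.indicator
        (fun ξ => b ^ 2 * Real.exp (-(π * b ^ 2 * ‖ξ‖ ^ 2))) ξ)
      = (fun r : ℝ => if a ≤ r then b ^ 2 * Real.exp (-(π * b ^ 2 * r ^ 2)) else 0) ‖ξ‖ := by
    intro ξ
    by_cases h : a ≤ ‖ξ‖ <;>
      simp [Set.indicator, h]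
  simp_rw [hfn]
  rw [MeasureTheory.integral_fun_norm_addHaar (volume : Measure ℂ)
      (fun r : ℝ => if a ≤ r then b ^ 2 * Real.exp (-(π * b ^ 2 * r ^ 2)) else 0)]
  rw [Complex.finrank_real_complex, measureReal_def, Complex.volume_ball]
  have h1 : ∫ y in Ioi (0:ℝ), y ^ (2 - 1) •
      (if a ≤ y then b ^ 2 * Real.exp (-(π * b ^ 2 * y ^ 2)) else 0)
      = ∫ y in Ioi (0:ℝ), (Ici a).indicator
          (fun y => y * (b ^ 2 * Real.exp (-(π * b ^ 2 * y ^ 2)))) y := by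
    refine integral_congr_ae (Filter.Eventually.of_forall fun y => ?_)
    by_cases h : a ≤ y <;> simp [Set.indicator, h]
  rw [h1, setIntegral_indicator measurableSet_Ici]
  have h2 : (Ioi (0:ℝ) ∩ Ici a : Set ℝ) =ᵐ[volume] Ioi a := by
    have e1 : (Ioi (0:ℝ) ∩ Ici a : Set ℝ) =ᵐ[volume] (Ioi (0:ℝ) ∩ Ioi a : Set ℝ) :=
      MeasureTheory.ae_eq_set_inter (Filter.EventuallyEq.refl _ _) Ioi_ae_eq_Ici.symm
    rw [Ioi_inter_Ioi, sup_eq_right.mpr ha] at e1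
    exact e1
  rw [setIntegral_congr_set h2]
  have h3 := ftc_tail_aux b a hb ha
  have h4 : ∫ y in Ioi a, y * (b ^ 2 * Real.exp (-(π * b ^ 2 * y ^ 2)))
      = (2 * π)⁻¹ * Real.exp (-(π * b ^ 2 * a ^ 2)) := by
    rw [← h3, ← MeasureTheory.integral_const_mul]
    refine setIntegral_congr_fun measurableSet_Ioi fun y _ => ?_
    field_simp
  rw [h4]
  have : ((ENNReal.ofReal 1 ^ 2 * NNReal.pi : ENNReal)).toReal = π := by
    simp [ENNReal.toReal_mul, NNReal.coe_real_pi]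
  rw [this]
  simp only [smul_eq_mul, nsmul_eq_mul]
  push_cast
  field_simp

private lemma gaussian_integrable_aux (b : ℝ) (hb : 0 < b) :
    Integrable (fun ξ : ℂ => b ^ 2 * Real.exp (-(π * b ^ 2 * ‖ξ‖ ^ 2))) := by
  have hpos : (0:ℝ) < π * b ^ 2 := by positivity
  have h := (GaussianFourier.integrable_cexp_neg_mul_sq_norm_add (V := ℂ)
      (b := ((π * b ^ 2 : ℝ) : ℂ)) (by rwa [Complex.ofReal_re]) 0 0).norm
  refine (h.congr (Filter.Eventually.of_forall fun ξ => ?_)).const_mul (b ^ 2)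
  simp only [Complex.norm_exp]
  congr 1
  rw [show (-((π*b^2:ℝ):ℂ) * ((‖ξ‖ : ℝ):ℂ)^2 + 0 * ((inner ℝ (0:ℂ) ξ : ℝ):ℂ))
      = ((-(π*b^2*‖ξ‖^2) : ℝ) : ℂ) by push_cast; ring, Complex.ofReal_re]

private lemma summable_gauss_aux (t : ℝ) (ht : 0 < t) :
    Summable fun m : ℤ => Real.exp (-(t * (m:ℝ) ^ 2)) := by
  have hnat : Summable fun n : ℕ => Real.exp (-(t * (n:ℝ) ^ 2)) := by
    refine Summable.of_nonneg_of_le (fun n => (Real.exp_pos _).le) (fun n => ?_)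
      (summable_geometric_of_lt_one (Real.exp_pos (-t)).le
        (Real.exp_lt_one_iff.mpr (by linarith)))
    rw [← Real.exp_nat_mul]
    apply Real.exp_le_exp.mpr
    have hn : (n:ℝ) ≤ (n:ℝ) ^ 2 := by
      calc (n:ℝ) = (n:ℝ) * 1 := by ring
      _ ≤ (n:ℝ) * (n:ℝ) := by
          rcases Nat.eq_zero_or_pos n with h | h
          · simp [h]
          · exact mul_le_mul_of_nonneg_left (by exact_mod_cast h) (Nat.cast_nonneg n)
      _ = (n:ℝ) ^ 2 := by ring
    nlinarith
  refine Summable.of_nat_of_neg ?_ ?_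
  · exact hnat.congr fun n => by push_cast; ring_nf
  · exact hnat.congr fun n => by push_cast; ring_nf

/-- Probabilistic formula for the theta invariant of the euclidean lattice
`(L, ‖·‖)` with `L = cℤ ⊂ ℝ ⊂ ℂ` and `‖z‖ = b·|z|`: the average, against the
Gaussian probability measure `dp(z) = b²·exp(−πb²|z|²) dx dy` (normalized so that
the mean of `‖z‖` is `1/2`), of the counting function
`[ξ/L] = #{ℓ ∈ L : ‖ℓ‖ ≤ ‖ξ‖}` equals the theta sum
`∑_{m ∈ ℤ} exp(−π b² c² m²) = exp(h⁰_θ(L,‖·‖))`. -/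
theorem average_counting_eq_theta (b c : ℝ) (hb : 0 < b) (hc : 0 < c) :
    ∫ ξ : ℂ,
        (Nat.card {m : ℤ // b * |c * (m : ℝ)| ≤ b * ‖ξ‖} : ℝ) *
          (b ^ 2 * Real.exp (-(π * b ^ 2 * ‖ξ‖ ^ 2))) =
      ∑' m : ℤ, Real.exp (-(π * (b * c * (m : ℝ)) ^ 2)) := by
  set w : ℂ → ℝ := fun ξ => b ^ 2 * Real.exp (-(π * b ^ 2 * ‖ξ‖ ^ 2)) with hw
  set F : ℤ → ℂ → ℝ := fun m ξ => ({ξ : ℂ | |c * (m:ℝ)| ≤ ‖ξ‖}.indicator w) ξ with hF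
  -- pointwise identity
  have hpt : ∀ ξ : ℂ,
      (Nat.card {m : ℤ // b * |c * (m : ℝ)| ≤ b * ‖ξ‖} : ℝ) * w ξ
        = ∑' m : ℤ, F m ξ := by
    intro ξ
    have hcard : (Nat.card {m : ℤ // b * |c * (m : ℝ)| ≤ b * ‖ξ‖} : ℝ)
        = ∑' m : ℤ, Set.indicator {m : ℤ | b * |c * (m:ℝ)| ≤ b * ‖ξ‖}
            (fun _ => (1:ℝ)) m := by
      rw [← tsum_subtype]
      rw [tsum_const]
      simp
      rfl
    rw [hcard, ← tsum_mul_right]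
    refine tsum_congr fun m => ?_
    have hiff : b * |c * (m:ℝ)| ≤ b * ‖ξ‖ ↔ |c * (m:ℝ)| ≤ ‖ξ‖ :=
      mul_le_mul_iff_right₀ hb
    by_cases h : |c * (m:ℝ)| ≤ ‖ξ‖ <;>
      simp [hF, Set.indicator, h, hiff, -abs_mul]
  refine (integral_congr_ae (Filter.Eventually.of_forall hpt)).trans ?_
  -- measurability and integrability of each term
  have hmeas : ∀ m : ℤ, MeasurableSet {ξ : ℂ | |c * (m:ℝ)| ≤ ‖ξ‖} :=
    fun m => measurableSet_le measurable_const continuous_norm.measurable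
  have hwint : Integrable w := gaussian_integrable_aux b hb
  have hFint : ∀ m : ℤ, Integrable (F m) := fun m => hwint.indicator (hmeas m)
  have hFnonneg : ∀ m : ℤ, ∀ ξ : ℂ, 0 ≤ F m ξ := by
    intro m ξ
    refine Set.indicator_nonneg (fun ξ _ => ?_) ξ
    positivity
  have hFval : ∀ m : ℤ, ∫ ξ : ℂ, F m ξ = Real.exp (-(π * (b * c * (m:ℝ)) ^ 2)) := by
    intro m
    have := gaussian_tail_aux b (|c * (m:ℝ)|) hb (abs_nonneg _)
    rw [hF]
    rw [this]
    rw [sq_abs]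
    ring_nf
  -- summability
  have hsum : Summable fun m : ℤ => Real.exp (-(π * (b * c * (m:ℝ)) ^ 2)) := by
    have := summable_gauss_aux (π * (b * c) ^ 2) (by positivity)
    exact this.congr fun m => by ring_nf
  -- swap integral and sum
  rw [MeasureTheory.integral_tsum (fun m => (hFint m).aestronglyMeasurable) ?_]
  · exact tsum_congr hFval
  · have hlin : ∀ m : ℤ, ∫⁻ ξ : ℂ, ‖F m ξ‖ₑ = ENNReal.ofReal (∫ ξ : ℂ, F m ξ) := by
      intro m
      rw [MeasureTheory.ofReal_integral_eq_lintegral_ofReal (hFint m)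
        (Filter.Eventually.of_forall (hFnonneg m))]
      refine lintegral_congr fun ξ => ?_
      rw [Real.enorm_eq_ofReal (hFnonneg m ξ)]
    simp_rw [hlin, hFval]
    rw [← ENNReal.ofReal_tsum_of_nonneg (fun m => (Real.exp_pos _).le) hsum]
    exact ENNReal.ofReal_ne_top
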